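/- Suppose ∑_{i=k-N+1}^{k} φ_i φ_i^T ≥ N δ² I_n. Then for any positive nondecreasing real sequence r_i and any vectors θ̃_{k-N}, θ̃_{k-N+1}, …, θ̃_{k-1} ∈ ℝ^n: −∑_{i=k-N+1}^{k} (φ_i^T θ̃_{i-1})² / r_i ≤ −(N δ² / r_k) ‖θ̃_{k-N}‖² − 2 ∑_{i=k-N+1}^{k} ((θ̃_{i-1} − θ̃_{k-N})^T φ_i)(φ_i^T θ̃_{k-N}) / r_i. -/

import Mathlib

open Finset

/-- Suppose `∑_{i=k-N+1}^{k} φ_i φ_iᵀ ≥ N δ² I_n` (as a quadratic-form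
inequality). Then for any positive nondecreasing real sequence `r_i` and any vectors
`θ̃_{k-N}, …, θ̃_{k-1} ∈ ℝⁿ`:
`−∑_{i=k-N+1}^{k} (φ_iᵀθ̃_{i-1})²/r_i ≤ −(N δ²/r_k)‖θ̃_{k-N}‖²
  − 2 ∑_{i=k-N+1}^{k} ((θ̃_{i-1} − θ̃_{k-N})ᵀφ_i)(φ_iᵀθ̃_{k-N})/r_i`. -/
theorem pe_block_lower_bound
    {n : ℕ} (hn : 1 ≤ n) (N : ℕ) (hN : 1 ≤ N) (δ : ℝ) (hδ : 0 < δ)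
    (k : ℕ) (hk : N ≤ k)
    (φ : ℕ → EuclideanSpace ℝ (Fin n))
    (hPE : ∀ x : EuclideanSpace ℝ (Fin n),
      (N : ℝ) * δ ^ 2 * ‖x‖ ^ 2 ≤ ∑ i ∈ Finset.Icc (k - N + 1) k, (inner ℝ (φ i) x : ℝ) ^ 2)
    (r : ℕ → ℝ) (hr_pos : ∀ i, 0 < r i) (hr_mono : Monotone r)
    (θtil : ℕ → EuclideanSpace ℝ (Fin n)) :
    -∑ i ∈ Finset.Icc (k - N + 1) k, (inner ℝ (φ i) (θtil (i - 1)) : ℝ) ^ 2 / r i ≤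
      -((N : ℝ) * δ ^ 2 / r k) * ‖θtil (k - N)‖ ^ 2 -
        2 * ∑ i ∈ Finset.Icc (k - N + 1) k,
          (inner ℝ (φ i) (θtil (i - 1) - θtil (k - N)) : ℝ) *
            (inner ℝ (φ i) (θtil (k - N)) : ℝ) / r i := by
  set θ0 := θtil (k - N) with hθ0
  have hrk := hr_pos k
  -- h1 : (Nδ²/r_k)‖θ0‖² ≤ ∑ c_i²/r_i
  have h1 : ((N : ℝ) * δ ^ 2 / r k) * ‖θ0‖ ^ 2 ≤
      ∑ i ∈ Finset.Icc (k - N + 1) k, (inner ℝ (φ i) θ0 : ℝ) ^ 2 / r i := by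
    have step1 : ((N : ℝ) * δ ^ 2 / r k) * ‖θ0‖ ^ 2 ≤
        (∑ i ∈ Finset.Icc (k - N + 1) k, (inner ℝ (φ i) θ0 : ℝ) ^ 2) / r k := by
      rw [div_mul_eq_mul_div]
      exact div_le_div_of_nonneg_right (hPE θ0) hrk.le
    refine step1.trans ?_
    rw [Finset.sum_div]
    apply Finset.sum_le_sum
    intro i hi
    have hik : i ≤ k := (Finset.mem_Icc.mp hi).2
    have hri := hr_pos i
    exact div_le_div_of_nonneg_left (sq_nonneg _) hri (hr_mono hik)
  -- termwise: c² + 2bc ≤ a²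
  have h2 : ∑ i ∈ Finset.Icc (k - N + 1) k,
      ((inner ℝ (φ i) θ0 : ℝ) ^ 2 / r i
        + 2 * ((inner ℝ (φ i) (θtil (i - 1) - θ0) : ℝ) * (inner ℝ (φ i) θ0 : ℝ) / r i)) ≤
      ∑ i ∈ Finset.Icc (k - N + 1) k, (inner ℝ (φ i) (θtil (i - 1)) : ℝ) ^ 2 / r i := by
    apply Finset.sum_le_sum
    intro i _
    have hri := hr_pos i
    have hb : (inner ℝ (φ i) (θtil (i - 1) - θ0) : ℝ)
        = (inner ℝ (φ i) (θtil (i - 1)) : ℝ) - (inner ℝ (φ i) θ0 : ℝ) :=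
      inner_sub_right _ _ _
    rw [hb, show 2 * (((inner ℝ (φ i) (θtil (i - 1)) : ℝ) - (inner ℝ (φ i) θ0 : ℝ)) * (inner ℝ (φ i) θ0 : ℝ) / r i) = (2 * ((inner ℝ (φ i) (θtil (i - 1)) : ℝ) - (inner ℝ (φ i) θ0 : ℝ)) * (inner ℝ (φ i) θ0 : ℝ)) / r i by ring, ← add_div, div_le_div_iff₀ hri hri]
    nlinarith [sq_nonneg ((inner ℝ (φ i) (θtil (i - 1)) : ℝ) - (inner ℝ (φ i) θ0 : ℝ)), hri.le, sq_nonneg (((inner ℝ (φ i) (θtil (i - 1)) : ℝ) - (inner ℝ (φ i) θ0 : ℝ)) * r i)]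
  rw [Finset.sum_add_distrib, ← Finset.mul_sum] at h2
  linarith
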